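/- Let F be an r-sort species admitting a composition operator Η. For every nonempty r-tuple Ω of finite sets, each choice of base point (ω,ρ) ∈ Ω, and every integer k ≥ 1, one has F_Η^(k)[Ω] = ∐ η(F_Η[Ω1] × F_Η^(k−1)[Ω − Ω1]), a disjoint union over all r-tuples Ω1 with (ω,ρ) ∈ Ω1 ⊆ Ω. -/

import Mathlib

open scoped Classical

noncomputable section

/-- Objects of `Set^r`: `r`-tuples of finite sets (realized as finite subsets of `ℕ`). -/
abbrev Obj (r : ℕ) := Fin r → Finset ℕ

variable {r : ℕ}

/-- The `r`-tuple of empty sets. -/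
def oEmpty (r : ℕ) : Obj r := fun _ => ∅

/-- Componentwise union (the disjoint union `⨿` when the arguments are
componentwise disjoint). -/
def oUnion (Ω₁ Ω₂ : Obj r) : Obj r := fun i => Ω₁ i ∪ Ω₂ i

/-- Componentwise intersection. -/
def oInter (Ω₁ Ω₂ : Obj r) : Obj r := fun i => Ω₁ i ∩ Ω₂ i

/-- Componentwise set difference. -/
def oDiff (Ω₁ Ω₂ : Obj r) : Obj r := fun i => Ω₁ i \ Ω₂ i

/-- Componentwise disjointness. -/
def oDisj (Ω₁ Ω₂ : Obj r) : Prop := ∀ i, Disjoint (Ω₁ i) (Ω₂ i)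

/-- Componentwise containment. -/
def oSub (Ω₁ Ω₂ : Obj r) : Prop := ∀ i, Ω₁ i ⊆ Ω₂ i

/-- A morphism of `Set^r`: an `r`-tuple of bijections between the components. -/
def Mor (Ω₁ Ω₂ : Obj r) : Type := ∀ i, {x // x ∈ Ω₁ i} ≃ {x // x ∈ Ω₂ i}

/-- The identity morphism. -/
def idMor (Ω : Obj r) : Mor Ω Ω := fun _ => Equiv.refl _

/-- Composition of morphisms. -/
def compMor {Ω₁ Ω₂ Ω₃ : Obj r} (f : Mor Ω₁ Ω₂) (g : Mor Ω₂ Ω₃) : Mor Ω₁ Ω₃ :=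
  fun i => (f i).trans (g i)

/-- An `r`-sort species: a (covariant) functor from `Set^r` to the category of
finite sets and bijections.  The value `F[Ω]` is the finite set `obj Ω`, and the
action on a morphism `f` is encoded by the function `map f : ℕ → ℕ` (only its
values on `obj Ω₁` are relevant). -/
structure Species (r : ℕ) where
  obj : Obj r → Finset ℕ
  map : ∀ {Ω₁ Ω₂ : Obj r}, Mor Ω₁ Ω₂ → ℕ → ℕ
  map_mem : ∀ {Ω₁ Ω₂ : Obj r} (f : Mor Ω₁ Ω₂), ∀ x ∈ obj Ω₁, map f x ∈ obj Ω₂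
  map_id : ∀ (Ω : Obj r), ∀ x ∈ obj Ω, map (idMor Ω) x = x
  map_comp : ∀ {Ω₁ Ω₂ Ω₃ : Obj r} (f : Mor Ω₁ Ω₂) (g : Mor Ω₂ Ω₃), ∀ x ∈ obj Ω₁,
    map (compMor f g) x = map g (map f x)

/-- The canonical identification of a disjoint union `s ∪ t` with the sum `s ⊕ t`. -/
def finsetSumEquiv {s t : Finset ℕ} (h : Disjoint s t) :
    {x // x ∈ s ∪ t} ≃ {x // x ∈ s} ⊕ {x // x ∈ t} :=
  (Equiv.subtypeEquivRight (fun x => by simp)).trans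
    (Equiv.Set.union (s := (↑s : Set ℕ)) (t := (↑t : Set ℕ)) (by exact_mod_cast h))

/-- The disjoint union of two bijections, as a bijection between unions. -/
def finsetUnionEquiv {s t s' t' : Finset ℕ} (h : Disjoint s t) (h' : Disjoint s' t')
    (f : {x // x ∈ s} ≃ {x // x ∈ s'}) (g : {x // x ∈ t} ≃ {x // x ∈ t'}) :
    {x // x ∈ s ∪ t} ≃ {x // x ∈ s' ∪ t'} :=
  (finsetSumEquiv h).trans ((f.sumCongr g).trans (finsetSumEquiv h').symm)

/-- The disjoint union `f ⨿ g` of two morphisms of `Set^r`. -/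
def morUnion {Ω₁ Ω₂ Ω₁' Ω₂' : Obj r} (h : oDisj Ω₁ Ω₂) (h' : oDisj Ω₁' Ω₂')
    (f : Mor Ω₁ Ω₁') (g : Mor Ω₂ Ω₂') : Mor (oUnion Ω₁ Ω₂) (oUnion Ω₁' Ω₂') :=
  fun i => finsetUnionEquiv (h i) (h' i) (f i) (g i)

/-- A composition operator `Η` for the species `F`: a natural transformation from
`F × F` (on pairs of componentwise disjoint objects) to `F ∘ ⨿` with injective
components, satisfying Axiom (D1). -/
structure CompOp {r : ℕ} (F : Species r) where
  η : Obj r → Obj r → ℕ × ℕ → ℕ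
  mem_η : ∀ {Ω₁ Ω₂ : Obj r}, oDisj Ω₁ Ω₂ → ∀ x ∈ F.obj Ω₁, ∀ y ∈ F.obj Ω₂,
    η Ω₁ Ω₂ (x, y) ∈ F.obj (oUnion Ω₁ Ω₂)
  inj_η : ∀ {Ω₁ Ω₂ : Obj r}, oDisj Ω₁ Ω₂ →
    Set.InjOn (η Ω₁ Ω₂) ((F.obj Ω₁ : Set ℕ) ×ˢ (F.obj Ω₂ : Set ℕ))
  natural : ∀ {Ω₁ Ω₂ Ω₁' Ω₂' : Obj r} (h : oDisj Ω₁ Ω₂) (h' : oDisj Ω₁' Ω₂')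
    (f : Mor Ω₁ Ω₁') (g : Mor Ω₂ Ω₂'), ∀ x ∈ F.obj Ω₁, ∀ y ∈ F.obj Ω₂,
    F.map (morUnion h h' f g) (η Ω₁ Ω₂ (x, y)) = η Ω₁' Ω₂' (F.map f x, F.map g y)
  D1 : ∀ {Ω₁ Ω₂ Ω₃ Ω₄ : Obj r}, oDisj Ω₁ Ω₂ → oDisj Ω₃ Ω₄ →
    oUnion Ω₁ Ω₂ = oUnion Ω₃ Ω₄ →
    η Ω₁ Ω₂ '' ((F.obj Ω₁ : Set ℕ) ×ˢ (F.obj Ω₂ : Set ℕ)) ∩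
      η Ω₃ Ω₄ '' ((F.obj Ω₃ : Set ℕ) ×ˢ (F.obj Ω₄ : Set ℕ)) =
    η Ω₁ Ω₂ ''
      ((η (oInter Ω₁ Ω₃) (oInter Ω₁ Ω₄) ''
          ((F.obj (oInter Ω₁ Ω₃) : Set ℕ) ×ˢ (F.obj (oInter Ω₁ Ω₄) : Set ℕ))) ×ˢ
        (η (oInter Ω₂ Ω₃) (oInter Ω₂ Ω₄) ''
          ((F.obj (oInter Ω₂ Ω₃) : Set ℕ) ×ˢ (F.obj (oInter Ω₂ Ω₄) : Set ℕ))))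

/-- The set `F_Η[Ω]` of indecomposable elements of `F[Ω]`. -/
def indec (F : Species r) (E : CompOp F) (Ω : Obj r) : Set ℕ :=
  if Ω = oEmpty r then ∅
  else (F.obj Ω : Set ℕ) \
    ⋃ (p : Obj r × Obj r) (_ : oDisj p.1 p.2) (_ : p.1 ≠ oEmpty r) (_ : p.2 ≠ oEmpty r)
      (_ : oUnion p.1 p.2 = Ω),
      E.η p.1 p.2 '' ((F.obj p.1 : Set ℕ) ×ˢ (F.obj p.2 : Set ℕ))

/-- The sets `F_Η^(k)[Ω]` of elements of `F[Ω]` consisting of exactly `k`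
indecomposable components. -/
def indecK (F : Species r) (E : CompOp F) : ℕ → Obj r → Set ℕ
  | 0 => fun Ω => if Ω = oEmpty r then (F.obj (oEmpty r) : Set ℕ) else ∅
  | (k + 1) => fun Ω => ⋃ (Ω₁ : Obj r) (_ : oSub Ω₁ Ω),
      E.η Ω₁ (oDiff Ω Ω₁) '' ((indec F E Ω₁) ×ˢ (indecK F E k (oDiff Ω Ω₁)))

/-- `Ω_I`: the componentwise disjoint union of the family `Ωs` over the index set `s`. -/
def bigU {ι : Type} [DecidableEq ι] (Ωs : ι → Obj r) (s : Finset ι) : Obj r :=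
  fun i => s.biUnion (fun j => Ωs j i)

/-- `Brack F E Ωs leaf s B` says that `B` is an `Η`-bracketing of the sets
`leaf (Ωs i)`, `i ∈ s` (each occurring exactly once).  For `leaf Ω = F[Ω]` this is an
`Η`-bracketing of the `F[Ωs i]`; for `leaf = indec F E` it is an `Η`-bracketing of
the `F_Η[Ωs i]`. -/
inductive Brack (F : Species r) (E : CompOp F) {ι : Type} [DecidableEq ι]
    (Ωs : ι → Obj r) (leaf : Obj r → Set ℕ) : Finset ι → Set ℕ → Prop
  | single (i : ι) : Brack F E Ωs leaf {i} (leaf (Ωs i))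
  | node {s t : Finset ι} {B₁ B₂ : Set ℕ} :
      Disjoint s t → s.Nonempty → t.Nonempty →
      Brack F E Ωs leaf s B₁ → Brack F E Ωs leaf t B₂ →
      Brack F E Ωs leaf (s ∪ t) (E.η (bigU Ωs s) (bigU Ωs t) '' (B₁ ×ˢ B₂))

/-- A `Λ`-weight on `(F, Η)`: Axioms (W0), (W1), (W2). -/
structure Weight {r : ℕ} (F : Species r) (E : CompOp F) (Λ : Type) [CommRing Λ]
    [Algebra ℚ Λ] where
  w : Obj r → ℕ → Λ
  W0 : ∀ x ∈ F.obj (oEmpty r), w (oEmpty r) x = 1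
  W1 : ∀ {Ω Ω' : Obj r} (f : Mor Ω Ω'), ∀ x ∈ F.obj Ω, w Ω' (F.map f x) = w Ω x
  W2 : ∀ {Ω₁ Ω₂ : Obj r}, oDisj Ω₁ Ω₂ → ∀ x ∈ indec F E Ω₁, ∀ y ∈ F.obj Ω₂,
    w (oUnion Ω₁ Ω₂) (E.η Ω₁ Ω₂ (x, y)) = w Ω₁ x * w Ω₂ y

/-- The standard object `([n₁], …, [n_r])`, with `[n] = {1, …, n}`. -/
def stdObj {r : ℕ} (n : Fin r → ℕ) : Obj r := fun i => Finset.Icc 1 (n i)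

/-- The exponential generating function
`Σ_{n₁,…,n_r ≥ 0} Σ_{x ∈ S[([n₁],…,[n_r])]} w(x) z₁^{n₁} ⋯ z_r^{n_r}/(n₁! ⋯ n_r!)`
of a subfamily `S` of a species `F`, with respect to a weight `w`. -/
def GF {r : ℕ} {Λ : Type} [CommRing Λ] [Algebra ℚ Λ] (F : Species r)
    (S : Obj r → Set ℕ) (w : Obj r → ℕ → Λ) : MvPowerSeries (Fin r) Λ :=
  fun d => (algebraMap ℚ Λ (∏ i, (1 / (Nat.factorial (d i)) : ℚ))) *
    ∑ x ∈ (F.obj (stdObj fun i => d i)).filter (fun x => x ∈ S (stdObj fun i => d i)),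
      w (stdObj fun i => d i) x

/-- The exponential `exp f = Σ_{k ≥ 0} f^k / k!` of a multivariate formal power
series `f` with zero constant term (the coefficient of a given monomial only
receives contributions from `k` at most the total degree). -/
def mvExp {σ Λ : Type} [CommRing Λ] [Algebra ℚ Λ] (f : MvPowerSeries σ Λ) :
    MvPowerSeries σ Λ :=
  fun d => ∑ k ∈ Finset.range ((d.sum fun _ m => m) + 1),
    algebraMap ℚ Λ ((1 : ℚ) / (Nat.factorial k)) * MvPowerSeries.coeff d (f ^ k)

/-- The logarithm `log f = Σ_{k ≥ 1} (-1)^{k+1} (f-1)^k / k` of a multivariate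
formal power series `f` with constant term `1`. -/
def mvLog {σ Λ : Type} [CommRing Λ] [Algebra ℚ Λ] (f : MvPowerSeries σ Λ) :
    MvPowerSeries σ Λ :=
  fun d => ∑ k ∈ Finset.Icc 1 (d.sum fun _ m => m),
    algebraMap ℚ Λ ((-1 : ℚ) ^ (k + 1) / k) * MvPowerSeries.coeff d ((f - 1) ^ k)

/-- The refined generating function `G̃F_F(z₁,…,z_r,y)`, a power series in
`z₁, …, z_r` with coefficients that are polynomials in `y` (recorded via
`Polynomial Λ`, the variable `y` being `Polynomial.X`):
`Σ_{n₁,…,n_r ≥ 0} Σ_k Σ_{x ∈ F_Η^(k)[([n₁],…,[n_r])]} y^k w(x) z₁^{n₁}⋯z_r^{n_r}/(n₁!⋯n_r!)`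
(for fixed `n₁, …, n_r` only the `k ≤ n₁ + ⋯ + n_r` contribute, since
`F_Η^(k)[Ω] = ∅ for k > ‖Ω‖`). -/
def tGF {r : ℕ} {Λ : Type} [CommRing Λ] [Algebra ℚ Λ] (F : Species r) (E : CompOp F)
    (w : Obj r → ℕ → Λ) : MvPowerSeries (Fin r) (Polynomial Λ) :=
  fun d => Polynomial.C (algebraMap ℚ Λ (∏ i, (1 / (Nat.factorial (d i)) : ℚ))) *
    ∑ k ∈ Finset.range ((∑ i, d i) + 1), Polynomial.X ^ k *
      Polynomial.C (∑ x ∈ (F.obj (stdObj fun i => d i)).filter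
          (fun x => x ∈ indecK F E k (stdObj fun i => d i)),
        w (stdObj fun i => d i) x)

/-- The species `E(F_Η)` of sets of `F_Η`-structures:  `E(F_Η)[Ω]` consists of all
finite sets `{(x₁,Ω₁),…,(x_k,Ω_k)}` with `x_i ∈ F_Η[Ω_i]`, the `Ω_i` nonempty and
pairwise componentwise disjoint, and `Ω₁ ⨿ ⋯ ⨿ Ω_k = Ω`. -/
def ESet {r : ℕ} (F : Species r) (E : CompOp F) (Ω : Obj r) :
    Set (Finset (ℕ × Obj r)) :=
  { s | (∀ p ∈ s, p.1 ∈ indec F E p.2 ∧ p.2 ≠ oEmpty r) ∧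
        (∀ p ∈ s, ∀ q ∈ s, p ≠ q → oDisj p.2 q.2) ∧
        (∀ i, Ω i = s.biUnion (fun p => p.2 i)) }

/-- The bijection between a finite set and its image under a map injective on it. -/
def imageEquiv {u : Finset ℕ} (g : ℕ → ℕ) (hg : Set.InjOn g (u : Set ℕ)) :
    {x // x ∈ u} ≃ {x // x ∈ u.image g} :=
  Equiv.ofBijective (fun x => ⟨g x, Finset.mem_image_of_mem g x.2⟩) (by
    constructor
    · rintro ⟨a, ha⟩ ⟨b, hb⟩ hab
      exact Subtype.ext (hg (by exact_mod_cast ha) (by exact_mod_cast hb)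
        (congrArg Subtype.val hab))
    · rintro ⟨y, hy⟩
      rcases Finset.mem_image.mp hy with ⟨a, ha, rfl⟩
      exact ⟨⟨a, ha⟩, rfl⟩)

/-- The underlying function `ℕ → ℕ` of the `i`-th component of a morphism. -/
def apMor {Ω Ω' : Obj r} (f : Mor Ω Ω') (i : Fin r) (a : ℕ) : ℕ :=
  if h : a ∈ Ω i then ((f i) ⟨a, h⟩ : ℕ) else a

/-- The componentwise image of a subobject `O ⊆ Ω` under a morphism `f : Ω → Ω'`. -/
def oImage {Ω Ω' : Obj r} (f : Mor Ω Ω') (O : Obj r) : Obj r :=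
  fun i => (O i).image (apMor f i)

/-- The restriction of a morphism `f : Ω → Ω'` to a subobject `O ⊆ Ω`. -/
def restrictMor {Ω Ω' : Obj r} (f : Mor Ω Ω') {O : Obj r} (hO : oSub O Ω) :
    Mor O (oImage f O) :=
  fun i => imageEquiv (apMor f i) (by
    intro a ha b hb hab
    have ha' : a ∈ Ω i := hO i (by exact_mod_cast ha)
    have hb' : b ∈ Ω i := hO i (by exact_mod_cast hb)
    have h1 : ((f i) ⟨a, ha'⟩ : ℕ) = ((f i) ⟨b, hb'⟩ : ℕ) := by
      simpa [apMor, dif_pos ha', dif_pos hb'] using hab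
    have h2 := (f i).injective (Subtype.ext h1)
    exact congrArg Subtype.val h2)

/-- The induced action of a morphism `f : Ω → Ω'` on `E(F_Η)[Ω]`. -/
def Emap {r : ℕ} (F : Species r) {Ω Ω' : Obj r} (f : Mor Ω Ω')
    (s : Finset (ℕ × Obj r)) : Finset (ℕ × Obj r) :=
  s.image (fun p =>
    if h : oSub p.2 Ω then (F.map (restrictMor f h) p.1, oImage f p.2) else p)

section Stmt13Helpers

variable {r : ℕ} {F : Species r} {E : CompOp F}

/-! ### Pointwise lemmas about objects -/

lemma odisj_not_mem {A B : Obj r} (h : oDisj A B) {i : Fin r} {t : ℕ}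
    (ht : t ∈ A i) : t ∉ B i := Finset.disjoint_left.mp (h i) ht

lemma odisj_symm {A B : Obj r} (h : oDisj A B) : oDisj B A := fun i => (h i).symm

lemma osub_trans {A B C : Obj r} (h1 : oSub A B) (h2 : oSub B C) : oSub A C :=
  fun i => (h1 i).trans (h2 i)

lemma osub_refl (A : Obj r) : oSub A A := fun _ => le_refl _

lemma odisj_mono {A B A' B' : Obj r} (h : oDisj A B) (hA : oSub A' A) (hB : oSub B' B) :
    oDisj A' B' := fun i => (h i).mono (hA i) (hB i)

lemma odisj_empty_left (A : Obj r) : oDisj (oEmpty r) A := fun i => by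
  simp [oEmpty]

lemma odisj_empty_right (A : Obj r) : oDisj A (oEmpty r) := fun i => by
  simp [oEmpty]

lemma oUnion_empty_left (A : Obj r) : oUnion (oEmpty r) A = A := by
  funext i; simp [oUnion, oEmpty]

lemma oUnion_empty_right (A : Obj r) : oUnion A (oEmpty r) = A := by
  funext i; simp [oUnion, oEmpty]

lemma odisj_diff (Ω A : Obj r) : oDisj A (oDiff Ω A) := fun i => Finset.disjoint_sdiff

lemma osub_union_left (A B : Obj r) : oSub A (oUnion A B) := fun i =>
  Finset.subset_union_left

lemma osub_union_right (A B : Obj r) : oSub B (oUnion A B) := fun i =>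
  Finset.subset_union_right

lemma oUnion_diff {A Ω : Obj r} (h : oSub A Ω) : oUnion A (oDiff Ω A) = Ω := by
  funext i; exact Finset.union_sdiff_of_subset (h i)

lemma odiff_sub (Ω A : Obj r) : oSub (oDiff Ω A) Ω := fun i => Finset.sdiff_subset

lemma osub_diff {P Ω Q : Obj r} (h : oSub P Ω) (hd : oDisj P Q) : oSub P (oDiff Ω Q) :=
  fun i t ht => Finset.mem_sdiff.mpr ⟨h i ht, odisj_not_mem hd ht⟩

lemma odisj_union_left {A B C : Obj r} (h1 : oDisj A C) (h2 : oDisj B C) :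
    oDisj (oUnion A B) C := fun i => by
  rw [oUnion]; exact Finset.disjoint_union_left.mpr ⟨h1 i, h2 i⟩

lemma odisj_union_right {A B C : Obj r} (h1 : oDisj A B) (h2 : oDisj A C) :
    oDisj A (oUnion B C) := fun i => by
  rw [oUnion]; exact Finset.disjoint_union_right.mpr ⟨h1 i, h2 i⟩

lemma oUnion_assoc (A B C : Obj r) : oUnion (oUnion A B) C = oUnion A (oUnion B C) := by
  funext i; simp [oUnion, Finset.union_assoc]

lemma oUnion_comm (A B : Obj r) : oUnion A B = oUnion B A := by
  funext i; simp [oUnion, Finset.union_comm]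

lemma oInter_eq_left {A B : Obj r} (h : oSub A B) : oInter A B = A := by
  funext i; exact Finset.inter_eq_left.mpr (h i)

lemma oInter_eq_right {A B : Obj r} (h : oSub B A) : oInter A B = B := by
  funext i; exact Finset.inter_eq_right.mpr (h i)

lemma oInter_eq_empty {A B : Obj r} (h : oDisj A B) : oInter A B = oEmpty r := by
  funext i; exact Finset.disjoint_iff_inter_eq_empty.mp (h i)

lemma oInter_union_distrib (A B C : Obj r) :
    oInter A (oUnion B C) = oUnion (oInter A B) (oInter A C) := by
  funext i; ext t
  simp only [oInter, oUnion, Finset.mem_inter, Finset.mem_union]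
  tauto

lemma osub_inter_left (A B : Obj r) : oSub (oInter A B) A := fun i =>
  Finset.inter_subset_left

lemma osub_inter_right (A B : Obj r) : oSub (oInter A B) B := fun i =>
  Finset.inter_subset_right

lemma oInter_union_sdiff (A B : Obj r) : oUnion (oInter A B) (oDiff A B) = A := by
  funext i; ext t
  simp only [oUnion, oInter, oDiff, Finset.mem_union, Finset.mem_inter, Finset.mem_sdiff]
  tauto

lemma oInter_diff {A Ω B : Obj r} (h : oSub A Ω) : oInter A (oDiff Ω B) = oDiff A B := by
  funext i; ext t
  have ht := @h i
  simp only [oInter, oDiff, Finset.mem_inter, Finset.mem_sdiff]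
  constructor
  · rintro ⟨h1, _, h3⟩; exact ⟨h1, h3⟩
  · rintro ⟨h1, h2⟩; exact ⟨h1, ht h1, h2⟩

lemma oInter_diff_diff {Ω P Q : Obj r} :
    oInter (oDiff Ω P) (oDiff Ω Q) = oDiff (oDiff Ω P) Q := by
  funext i; ext t
  simp only [oInter, oDiff, Finset.mem_inter, Finset.mem_sdiff]
  tauto

lemma oDiff_comm' (Ω P Q : Obj r) : oDiff (oDiff Ω P) Q = oDiff (oDiff Ω Q) P := by
  funext i; ext t
  simp only [oDiff, Finset.mem_sdiff]
  tauto

lemma oUnion_diff_diff {Ω P Q : Obj r} (hP : oSub P Ω) (hPQ : oDisj P Q) :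
    oUnion P (oDiff (oDiff Ω P) Q) = oDiff Ω Q := by
  funext i; ext t
  have h1 := @hP i
  have h2 : t ∈ P i → t ∉ Q i := fun ht => odisj_not_mem hPQ ht
  simp only [oUnion, oDiff, Finset.mem_union, Finset.mem_sdiff]
  constructor
  · rintro (ht | ⟨⟨htΩ, _⟩, htQ⟩)
    · exact ⟨h1 ht, h2 ht⟩
    · exact ⟨htΩ, htQ⟩
  · rintro ⟨htΩ, htQ⟩
    by_cases htP : t ∈ P i
    · exact Or.inl htP
    · exact Or.inr ⟨⟨htΩ, htP⟩, htQ⟩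

lemma osub_of_diff_eq_empty {A B : Obj r} (h : oDiff A B = oEmpty r) : oSub A B :=
  fun i => Finset.sdiff_eq_empty_iff_subset.mp (congrFun h i)

lemma ne_oEmpty_of_mem {A : Obj r} {i : Fin r} {t : ℕ} (ht : t ∈ A i) : A ≠ oEmpty r := by
  intro h; rw [h] at ht; simp [oEmpty] at ht

/-! ### The decomposition sets `eIm` -/

/-- `η(F[P] × F[Q])`, the set of elements decomposing along `(P, Q)`. -/
def eIm (F : Species r) (E : CompOp F) (P Q : Obj r) : Set ℕ :=
  E.η P Q '' ((F.obj P : Set ℕ) ×ˢ (F.obj Q : Set ℕ))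

lemma mem_eIm {P Q : Obj r} {x : ℕ} :
    x ∈ eIm F E P Q ↔ ∃ a b, a ∈ F.obj P ∧ b ∈ F.obj Q ∧ E.η P Q (a, b) = x := by
  constructor
  · rintro ⟨⟨a, b⟩, ⟨ha, hb⟩, h⟩
    exact ⟨a, b, ha, hb, h⟩
  · rintro ⟨a, b, ha, hb, h⟩
    exact ⟨(a, b), ⟨ha, hb⟩, h⟩

lemma eIm_sub {P Q : Obj r} (h : oDisj P Q) : eIm F E P Q ⊆ ↑(F.obj (oUnion P Q)) := by
  rintro x hx
  obtain ⟨a, b, ha, hb, rfl⟩ := mem_eIm.mp hx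
  exact E.mem_η h a ha b hb

lemma eta_mem_eIm {P Q : Obj r} {a b : ℕ} (ha : a ∈ F.obj P) (hb : b ∈ F.obj Q) :
    E.η P Q (a, b) ∈ eIm F E P Q := mem_eIm.mpr ⟨a, b, ha, hb, rfl⟩

lemma eta_inj {P Q : Obj r} (h : oDisj P Q) {a b a' b' : ℕ}
    (ha : a ∈ F.obj P) (hb : b ∈ F.obj Q) (ha' : a' ∈ F.obj P) (hb' : b' ∈ F.obj Q)
    (heq : E.η P Q (a, b) = E.η P Q (a', b')) : a = a' ∧ b = b' := by
  have hmem1 : ((a, b) : ℕ × ℕ) ∈ (↑(F.obj P) : Set ℕ) ×ˢ (↑(F.obj Q) : Set ℕ) := ⟨ha, hb⟩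
  have hmem2 : ((a', b') : ℕ × ℕ) ∈ (↑(F.obj P) : Set ℕ) ×ˢ (↑(F.obj Q) : Set ℕ) := ⟨ha', hb'⟩
  have h2 := E.inj_η h hmem1 hmem2 heq
  exact ⟨congrArg Prod.fst h2, congrArg Prod.snd h2⟩

/-! ### Saturation: `η(F[∅] × F[S]) = F[S] = η(F[S] × F[∅])` when `F[∅] ≠ ∅` -/

lemma obj_empty_card (F : Species r) (E : CompOp F) : (F.obj (oEmpty r)).card ≤ 1 := by
  by_contra hcon
  push_neg at hcon
  set s := F.obj (oEmpty r) with hs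
  have hdisj : oDisj (oEmpty r) (oEmpty r) := odisj_empty_left _
  have hmem : ∀ p ∈ s ×ˢ s, E.η (oEmpty r) (oEmpty r) p ∈ s := by
    rintro ⟨a, b⟩ hp
    rw [Finset.mem_product] at hp
    have h := E.mem_η hdisj a hp.1 b hp.2
    rwa [oUnion_empty_left] at h
  have hinj : Set.InjOn (E.η (oEmpty r) (oEmpty r)) ↑(s ×ˢ s) := by
    rw [Finset.coe_product]; exact E.inj_η hdisj
  have hcard := Finset.card_image_of_injOn hinj
  have hsub : (s ×ˢ s).image (E.η (oEmpty r) (oEmpty r)) ⊆ s :=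
    Finset.image_subset_iff.mpr hmem
  have hle := Finset.card_le_card hsub
  rw [hcard, Finset.card_product] at hle
  nlinarith

lemma satL (hne : (F.obj (oEmpty r)).Nonempty) (S : Obj r) :
    eIm F E (oEmpty r) S = ↑(F.obj S) := by
  obtain ⟨e, he⟩ := hne
  apply Set.Subset.antisymm
  · intro x hx
    have h := eIm_sub (odisj_empty_left S) hx
    rwa [oUnion_empty_left] at h
  · set g : ℕ → ℕ := fun y => E.η (oEmpty r) S (e, y) with hg
    have hinj : Set.InjOn g ↑(F.obj S) := by
      intro y hy y' hy' hgy
      exact (eta_inj (odisj_empty_left S) he (Finset.mem_coe.mp hy) he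
        (Finset.mem_coe.mp hy') hgy).2
    have hmemg : ∀ y ∈ F.obj S, g y ∈ F.obj S := fun y hy => by
      have h := E.mem_η (odisj_empty_left S) e he y hy
      rwa [oUnion_empty_left] at h
    have hsub : (F.obj S).image g ⊆ F.obj S := Finset.image_subset_iff.mpr hmemg
    have hcard : ((F.obj S).image g).card = (F.obj S).card :=
      Finset.card_image_of_injOn hinj
    have heqf : (F.obj S).image g = F.obj S :=
      Finset.eq_of_subset_of_card_le hsub (le_of_eq hcard.symm)
    intro x hx
    have hx' : x ∈ (F.obj S).image g := by rw [heqf]; exact_mod_cast hx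
    obtain ⟨y, hy, rfl⟩ := Finset.mem_image.mp hx'
    exact mem_eIm.mpr ⟨e, y, he, hy, rfl⟩

lemma satR (hne : (F.obj (oEmpty r)).Nonempty) (S : Obj r) :
    eIm F E S (oEmpty r) = ↑(F.obj S) := by
  obtain ⟨e, he⟩ := hne
  apply Set.Subset.antisymm
  · intro x hx
    have h := eIm_sub (odisj_empty_right S) hx
    rwa [oUnion_empty_right] at h
  · set g : ℕ → ℕ := fun y => E.η S (oEmpty r) (y, e) with hg
    have hinj : Set.InjOn g ↑(F.obj S) := by
      intro y hy y' hy' hgy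
      exact (eta_inj (odisj_empty_right S) (Finset.mem_coe.mp hy) he
        (Finset.mem_coe.mp hy') he hgy).1
    have hmemg : ∀ y ∈ F.obj S, g y ∈ F.obj S := fun y hy => by
      have h := E.mem_η (odisj_empty_right S) y hy e he
      rwa [oUnion_empty_right] at h
    have hsub : (F.obj S).image g ⊆ F.obj S := Finset.image_subset_iff.mpr hmemg
    have hcard : ((F.obj S).image g).card = (F.obj S).card :=
      Finset.card_image_of_injOn hinj
    have heqf : (F.obj S).image g = F.obj S :=
      Finset.eq_of_subset_of_card_le hsub (le_of_eq hcard.symm)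
    intro x hx
    have hx' : x ∈ (F.obj S).image g := by rw [heqf]; exact_mod_cast hx
    obtain ⟨y, hy, rfl⟩ := Finset.mem_image.mp hx'
    exact mem_eIm.mpr ⟨y, e, hy, he, rfl⟩


/-! ### Basic properties of `indec` and `indecK` -/

lemma mem_indec {Ω : Obj r} {x : ℕ} (hΩ : Ω ≠ oEmpty r) :
    x ∈ indec F E Ω ↔ x ∈ F.obj Ω ∧
      ∀ I J : Obj r, oDisj I J → I ≠ oEmpty r → J ≠ oEmpty r → oUnion I J = Ω →
        x ∉ eIm F E I J := by
  rw [indec, if_neg hΩ]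
  constructor
  · rintro ⟨hxF, hx⟩
    refine ⟨hxF, fun I J h1 h2 h3 h4 hIm => hx ?_⟩
    exact Set.mem_iUnion.mpr ⟨(I, J), Set.mem_iUnion.mpr ⟨h1, Set.mem_iUnion.mpr ⟨h2,
      Set.mem_iUnion.mpr ⟨h3, Set.mem_iUnion.mpr ⟨h4, hIm⟩⟩⟩⟩⟩
  · rintro ⟨hxF, hx⟩
    refine ⟨hxF, fun hmem => ?_⟩
    obtain ⟨p, hp⟩ := Set.mem_iUnion.mp hmem
    obtain ⟨h1, hp⟩ := Set.mem_iUnion.mp hp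
    obtain ⟨h2, hp⟩ := Set.mem_iUnion.mp hp
    obtain ⟨h3, hp⟩ := Set.mem_iUnion.mp hp
    obtain ⟨h4, hp⟩ := Set.mem_iUnion.mp hp
    exact hx p.1 p.2 h1 h2 h3 h4 hp

lemma indec_sub {Ω : Obj r} {x : ℕ} (hx : x ∈ indec F E Ω) : x ∈ F.obj Ω := by
  rw [indec] at hx
  split_ifs at hx with h
  · simp at hx
  · exact hx.1

lemma indec_ne {Ω : Obj r} {x : ℕ} (hx : x ∈ indec F E Ω) : Ω ≠ oEmpty r := by
  intro h
  rw [indec, if_pos h] at hx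
  simp at hx

lemma mem_indecK_succ {k : ℕ} {Ω : Obj r} {x : ℕ} :
    x ∈ indecK F E (k + 1) Ω ↔ ∃ O : Obj r, oSub O Ω ∧
      x ∈ E.η O (oDiff Ω O) '' (indec F E O ×ˢ indecK F E k (oDiff Ω O)) := by
  rw [indecK]
  simp [Set.mem_iUnion]

lemma indecK_zero_iff {Ω : Obj r} {x : ℕ} :
    x ∈ indecK F E 0 Ω ↔ Ω = oEmpty r ∧ x ∈ F.obj (oEmpty r) := by
  rw [indecK]
  simp only []
  split_ifs with h <;> simp [h]

lemma indecK_sub : ∀ (m : ℕ) (Ω : Obj r) {x : ℕ}, x ∈ indecK F E m Ω → x ∈ F.obj Ω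
  | 0, Ω, x, hx => by
    obtain ⟨h1, h2⟩ := indecK_zero_iff.mp hx
    rw [h1]; exact h2
  | (m + 1), Ω, x, hx => by
    obtain ⟨O, hO, hx⟩ := mem_indecK_succ.mp hx
    obtain ⟨⟨a, b⟩, ⟨ha, hb⟩, rfl⟩ := hx
    have h1 := E.mem_η (odisj_diff Ω O) a (indec_sub ha) b (indecK_sub m _ hb)
    rwa [oUnion_diff hO] at h1

lemma indecK_all_empty (hE : F.obj (oEmpty r) = ∅) :
    ∀ (m : ℕ) (Ω : Obj r), indecK F E m Ω = ∅
  | 0, Ω => by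
    ext x; simp [indecK_zero_iff, hE]
  | (m + 1), Ω => by
    ext x
    simp only [Set.mem_empty_iff_false, iff_false]
    intro hx
    obtain ⟨O, hO, ⟨⟨a, b⟩, ⟨ha, hb⟩, _⟩⟩ := mem_indecK_succ.mp hx
    rw [indecK_all_empty hE m] at hb
    exact hb

/-! ### The three D1-transfer lemmas -/

/-- Transfer of the second component: if `x = η(y, Δ)` along `(A, A')` then
`Δ` decomposes along `(P, Q)` iff `x` decomposes along `(A ∪ P, Q)`. -/
lemma pairRepl {A A' P Q : Obj r} {y Δ : ℕ}
    (hAA' : oDisj A A') (hy : y ∈ F.obj A) (hΔ : Δ ∈ F.obj A')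
    (hyU : y ∈ eIm F E A (oEmpty r))
    (hPQ : oDisj P Q) (hU : oUnion P Q = A') :
    Δ ∈ eIm F E P Q ↔ E.η A A' (y, Δ) ∈ eIm F E (oUnion A P) Q := by
  have hPA' : oSub P A' := hU ▸ osub_union_left P Q
  have hQA' : oSub Q A' := hU ▸ osub_union_right P Q
  have hdisjC : oDisj (oUnion A P) Q :=
    odisj_union_left (odisj_mono hAA' (osub_refl A) hQA') hPQ
  have hUU : oUnion A A' = oUnion (oUnion A P) Q := by
    rw [oUnion_assoc, hU]
  have e1 : oInter A (oUnion A P) = A :=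
    oInter_eq_left (osub_union_left A P)
  have e2 : oInter A Q = oEmpty r :=
    oInter_eq_empty (odisj_mono hAA' (osub_refl A) hQA')
  have e3 : oInter A' (oUnion A P) = P := by
    rw [oInter_union_distrib, oInter_eq_empty (odisj_symm hAA'), oInter_eq_right hPA',
      oUnion_empty_left]
  have e4 : oInter A' Q = Q := oInter_eq_right hQA'
  have hD := E.D1 hAA' hdisjC hUU
  rw [e1, e2, e3, e4] at hD
  have hD' : eIm F E A A' ∩ eIm F E (oUnion A P) Q =
      E.η A A' '' ((eIm F E A (oEmpty r)) ×ˢ (eIm F E P Q)) := hD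
  constructor
  · intro hΔPQ
    have hx : E.η A A' (y, Δ) ∈ eIm F E A A' ∩ eIm F E (oUnion A P) Q := by
      rw [hD']
      exact ⟨(y, Δ), ⟨hyU, hΔPQ⟩, rfl⟩
    exact hx.2
  · intro hx
    have hx2 : E.η A A' (y, Δ) ∈ eIm F E A A' ∩ eIm F E (oUnion A P) Q :=
      ⟨eta_mem_eIm hy hΔ, hx⟩
    rw [hD'] at hx2
    obtain ⟨⟨y₂, Δ₂⟩, ⟨hy₂, hΔ₂⟩, heq⟩ := hx2
    have hy₂F : y₂ ∈ F.obj A := by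
      have h := eIm_sub (odisj_empty_right A) hy₂
      rwa [oUnion_empty_right] at h
    have hΔ₂F : Δ₂ ∈ F.obj A' := by
      have h := eIm_sub hPQ hΔ₂
      rwa [hU] at h
    have h2 := eta_inj hAA' hy₂F hΔ₂F hy hΔ heq
    rw [← h2.2]
    exact hΔ₂

/-- Transfer of the first component: if `x = η(y, Δ)` along `(A, A')` then
`y` decomposes along `(P, Q)` iff `x` decomposes along `(P, Q ∪ A')`. -/
lemma firstRepl {A A' P Q : Obj r} {y Δ : ℕ}
    (hAA' : oDisj A A') (hy : y ∈ F.obj A) (hΔ : Δ ∈ F.obj A')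
    (hΔU : Δ ∈ eIm F E (oEmpty r) A')
    (hPQ : oDisj P Q) (hU : oUnion P Q = A) :
    y ∈ eIm F E P Q ↔ E.η A A' (y, Δ) ∈ eIm F E P (oUnion Q A') := by
  have hPA : oSub P A := hU ▸ osub_union_left P Q
  have hQA : oSub Q A := hU ▸ osub_union_right P Q
  have hdisjC : oDisj P (oUnion Q A') :=
    odisj_union_right hPQ (odisj_mono hAA' hPA (osub_refl A'))
  have hUU : oUnion A A' = oUnion P (oUnion Q A') := by
    rw [← oUnion_assoc, hU]
  have e1 : oInter A P = P := oInter_eq_right hPA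
  have e2 : oInter A (oUnion Q A') = Q := by
    rw [oInter_union_distrib, oInter_eq_right hQA, oInter_eq_empty hAA',
      oUnion_empty_right]
  have e3 : oInter A' P = oEmpty r :=
    oInter_eq_empty (odisj_mono (odisj_symm hAA') (osub_refl A') hPA)
  have e4 : oInter A' (oUnion Q A') = A' := by
    rw [oInter_union_distrib, oInter_eq_empty (odisj_mono (odisj_symm hAA')
      (osub_refl A') hQA), oInter_eq_left (osub_refl A'), oUnion_empty_left]
  have hD := E.D1 hAA' hdisjC hUU
  rw [e1, e2, e3, e4] at hD
  have hD' : eIm F E A A' ∩ eIm F E P (oUnion Q A') =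
      E.η A A' '' ((eIm F E P Q) ×ˢ (eIm F E (oEmpty r) A')) := hD
  constructor
  · intro hyPQ
    have hx : E.η A A' (y, Δ) ∈ eIm F E A A' ∩ eIm F E P (oUnion Q A') := by
      rw [hD']
      exact ⟨(y, Δ), ⟨hyPQ, hΔU⟩, rfl⟩
    exact hx.2
  · intro hx
    have hx2 : E.η A A' (y, Δ) ∈ eIm F E A A' ∩ eIm F E P (oUnion Q A') :=
      ⟨eta_mem_eIm hy hΔ, hx⟩
    rw [hD'] at hx2
    obtain ⟨⟨y₂, Δ₂⟩, ⟨hy₂, hΔ₂⟩, heq⟩ := hx2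
    have hy₂F : y₂ ∈ F.obj A := by
      have h := eIm_sub hPQ hy₂
      rwa [hU] at h
    have hΔ₂F : Δ₂ ∈ F.obj A' := by
      have h := eIm_sub (odisj_empty_left A') hΔ₂
      rwa [oUnion_empty_left] at h
    have h2 := eta_inj hAA' hy₂F hΔ₂F hy hΔ heq
    rw [← h2.1]
    exact hy₂

/-- Promotion of a nested first block: if `x = η(y, Δ)` along `(A, A')` then
`Δ` decomposes along `(P, Q)` iff `x` decomposes along `(P, A ∪ Q)`. -/
lemma promote {A A' P Q : Obj r} {y Δ : ℕ}
    (hAA' : oDisj A A') (hy : y ∈ F.obj A) (hΔ : Δ ∈ F.obj A')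
    (hyU : y ∈ eIm F E (oEmpty r) A)
    (hPQ : oDisj P Q) (hU : oUnion P Q = A') :
    Δ ∈ eIm F E P Q ↔ E.η A A' (y, Δ) ∈ eIm F E P (oUnion A Q) := by
  have hPA' : oSub P A' := hU ▸ osub_union_left P Q
  have hQA' : oSub Q A' := hU ▸ osub_union_right P Q
  have hdisjC : oDisj P (oUnion A Q) :=
    odisj_union_right (odisj_mono (odisj_symm hAA') hPA' (osub_refl A)) hPQ
  have hUU : oUnion A A' = oUnion P (oUnion A Q) := by
    rw [← hU, ← oUnion_assoc, oUnion_comm A P, oUnion_assoc]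
  have e1 : oInter A P = oEmpty r :=
    oInter_eq_empty (odisj_mono hAA' (osub_refl A) hPA')
  have e2 : oInter A (oUnion A Q) = A := oInter_eq_left (osub_union_left A Q)
  have e3 : oInter A' P = P := oInter_eq_right hPA'
  have e4 : oInter A' (oUnion A Q) = Q := by
    rw [oInter_union_distrib, oInter_eq_empty (odisj_symm hAA'), oInter_eq_right hQA',
      oUnion_empty_left]
  have hD := E.D1 hAA' hdisjC hUU
  rw [e1, e2, e3, e4] at hD
  have hD' : eIm F E A A' ∩ eIm F E P (oUnion A Q) =
      E.η A A' '' ((eIm F E (oEmpty r) A) ×ˢ (eIm F E P Q)) := hD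
  constructor
  · intro hΔPQ
    have hx : E.η A A' (y, Δ) ∈ eIm F E A A' ∩ eIm F E P (oUnion A Q) := by
      rw [hD']
      exact ⟨(y, Δ), ⟨hyU, hΔPQ⟩, rfl⟩
    exact hx.2
  · intro hx
    have hx2 : E.η A A' (y, Δ) ∈ eIm F E A A' ∩ eIm F E P (oUnion A Q) :=
      ⟨eta_mem_eIm hy hΔ, hx⟩
    rw [hD'] at hx2
    obtain ⟨⟨y₂, Δ₂⟩, ⟨hy₂, hΔ₂⟩, heq⟩ := hx2
    have hy₂F : y₂ ∈ F.obj A := by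
      have h := eIm_sub (odisj_empty_left A) hy₂
      rwa [oUnion_empty_left] at h
    have hΔ₂F : Δ₂ ∈ F.obj A' := by
      have h := eIm_sub hPQ hΔ₂
      rwa [hU] at h
    have h2 := eta_inj hAA' hy₂F hΔ₂F hy hΔ heq
    rw [← h2.2]
    exact hΔ₂



/-! ### Elements with the same decomposition behaviour lie in the same `indecK` sets -/

lemma latEq (hne : (F.obj (oEmpty r)).Nonempty) :
    ∀ (m : ℕ) (D : Obj r) (d d₀ : ℕ), d ∈ F.obj D → d₀ ∈ F.obj D →
      (∀ S T : Obj r, oDisj S T → oUnion S T = D →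
        (d ∈ eIm F E S T ↔ d₀ ∈ eIm F E S T)) →
      d ∈ indecK F E m D → d₀ ∈ indecK F E m D
  | 0, D, d, d₀, hd, hd₀, hsame, hm => by
    obtain ⟨h1, _⟩ := indecK_zero_iff.mp hm
    refine indecK_zero_iff.mpr ⟨h1, ?_⟩
    rw [h1] at hd₀; exact hd₀
  | (m + 1), D, d, d₀, hd, hd₀, hsame, hm => by
    obtain ⟨S, hS, him⟩ := mem_indecK_succ.mp hm
    obtain ⟨⟨c, e⟩, ⟨hc, he⟩, heq⟩ := him
    have hdisj : oDisj S (oDiff D S) := odisj_diff D S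
    have hUS : oUnion S (oDiff D S) = D := oUnion_diff hS
    have hcF : c ∈ F.obj S := indec_sub hc
    have heF : e ∈ F.obj (oDiff D S) := indecK_sub m _ he
    have hdIm : d ∈ eIm F E S (oDiff D S) := by
      rw [← heq]; exact eta_mem_eIm hcF heF
    have hd₀Im : d₀ ∈ eIm F E S (oDiff D S) := (hsame S _ hdisj hUS).mp hdIm
    obtain ⟨c', e', hc'F, he'F, heq'⟩ := mem_eIm.mp hd₀Im
    have hSne : S ≠ oEmpty r := indec_ne hc
    have hesat : e ∈ eIm F E (oEmpty r) (oDiff D S) := by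
      rw [satL hne]; exact heF
    have he'sat : e' ∈ eIm F E (oEmpty r) (oDiff D S) := by
      rw [satL hne]; exact he'F
    have hcsat : c ∈ eIm F E S (oEmpty r) := by rw [satR hne]; exact hcF
    have hc'sat : c' ∈ eIm F E S (oEmpty r) := by rw [satR hne]; exact hc'F
    -- `c'` is indecomposable
    have hc' : c' ∈ indec F E S := by
      rw [mem_indec hSne]
      refine ⟨hc'F, fun I J h1 h2 h3 h4 hIm => ?_⟩
      have hIS : oSub I S := h4 ▸ osub_union_left I J
      have hJS : oSub J S := h4 ▸ osub_union_right I J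
      have step1 := (firstRepl hdisj hc'F he'F he'sat h1 h4).mp hIm
      rw [heq'] at step1
      have hdisjI : oDisj I (oUnion J (oDiff D S)) :=
        odisj_union_right h1 (odisj_mono hdisj hIS (osub_refl _))
      have hUI : oUnion I (oUnion J (oDiff D S)) = D := by
        rw [← oUnion_assoc, h4, hUS]
      have step2 := (hsame I _ hdisjI hUI).mpr step1
      have step3 : E.η S (oDiff D S) (c, e) ∈ eIm F E I (oUnion J (oDiff D S)) := by
        rw [heq]; exact step2
      have step4 := (firstRepl hdisj hcF heF hesat h1 h4).mpr step3
      exact ((mem_indec hSne).mp hc).2 I J h1 h2 h3 h4 step4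
    -- `e'` has the same decomposition behaviour as `e`
    have he' : e' ∈ indecK F E m (oDiff D S) := by
      refine latEq hne m _ e e' heF he'F ?_ he
      intro T₁ T₂ ht htU
      have hT₁ : oSub T₁ (oDiff D S) := htU ▸ osub_union_left T₁ T₂
      have hT₂ : oSub T₂ (oDiff D S) := htU ▸ osub_union_right T₁ T₂
      have hdisjST : oDisj (oUnion S T₁) T₂ :=
        odisj_union_left (odisj_mono hdisj (osub_refl S) hT₂) ht
      have hUST : oUnion (oUnion S T₁) T₂ = D := by
        rw [oUnion_assoc, htU, hUS]
      have i1 := pairRepl hdisj hcF heF hcsat ht htU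
      rw [heq] at i1
      have i2 := pairRepl hdisj hc'F he'F hc'sat ht htU
      rw [heq'] at i2
      exact i1.trans ((hsame (oUnion S T₁) T₂ hdisjST hUST).trans i2.symm)
    exact mem_indecK_succ.mpr ⟨S, hS, ⟨(c', e'), ⟨hc', he'⟩, heq'⟩⟩



/-! ### The exchange lemma -/

lemma exchange (hne : (F.obj (oEmpty r)).Nonempty) {Ω P Q : Obj r} {a c d : ℕ} {m : ℕ}
    (hP : oSub P Ω) (hQ : oSub Q (oDiff Ω P))
    (ha : a ∈ indec F E P) (hc : c ∈ indec F E Q)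
    (hd : d ∈ indecK F E m (oDiff (oDiff Ω P) Q)) :
    E.η P (oDiff Ω P) (a, E.η Q (oDiff (oDiff Ω P) Q) (c, d)) ∈
      E.η Q (oDiff Ω Q) '' (indec F E Q ×ˢ indecK F E (m + 1) (oDiff Ω Q)) := by
  -- basic facts
  have haF : a ∈ F.obj P := indec_sub ha
  have hcF : c ∈ F.obj Q := indec_sub hc
  have hdF : d ∈ F.obj (oDiff (oDiff Ω P) Q) := indecK_sub m _ hd
  have hQD' : oDisj Q (oDiff (oDiff Ω P) Q) := odisj_diff _ Q
  have hUQD' : oUnion Q (oDiff (oDiff Ω P) Q) = oDiff Ω P := oUnion_diff hQ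
  have hbF : E.η Q (oDiff (oDiff Ω P) Q) (c, d) ∈ F.obj (oDiff Ω P) := by
    have h := E.mem_η hQD' c hcF d hdF
    rwa [hUQD'] at h
  have hPΩP : oDisj P (oDiff Ω P) := odisj_diff Ω P
  have hUP : oUnion P (oDiff Ω P) = Ω := oUnion_diff hP
  have hPQ : oDisj P Q := odisj_mono hPΩP (osub_refl P) hQ
  have hQΩ : oSub Q Ω := osub_trans hQ (odiff_sub Ω P)
  have hQΩQ : oDisj Q (oDiff Ω Q) := odisj_diff Ω Q
  have hUQ : oUnion Q (oDiff Ω Q) = Ω := oUnion_diff hQΩ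
  have hPD' : oDisj P (oDiff (oDiff Ω P) Q) :=
    odisj_mono hPΩP (osub_refl P) (odiff_sub _ Q)
  have ePD' : oUnion P (oDiff (oDiff Ω P) Q) = oDiff Ω Q := oUnion_diff_diff hP hPQ
  have hPΩQ : oSub P (oDiff Ω Q) := osub_diff hP hPQ
  -- Step 1: x decomposes along (Q, Ω − Q)
  have hbIm : E.η Q (oDiff (oDiff Ω P) Q) (c, d) ∈ eIm F E Q (oDiff (oDiff Ω P) Q) :=
    eta_mem_eIm hcF hdF
  have hasatL : a ∈ eIm F E (oEmpty r) P := by rw [satL hne]; exact haF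
  have step1 := (promote hPΩP haF hbF hasatL hQD' hUQD').mp hbIm
  rw [ePD'] at step1
  obtain ⟨u, w, huF, hwF, hxeq⟩ := mem_eIm.mp step1
  -- Step 2: w decomposes along (P, D')
  have hD := E.D1 hQΩQ hPΩP (hUQ.trans hUP.symm)
  have e1 : oInter Q P = oEmpty r := oInter_eq_empty (odisj_symm hPQ)
  have e2 : oInter Q (oDiff Ω P) = Q := oInter_eq_left hQ
  have e3 : oInter (oDiff Ω Q) P = P := oInter_eq_right hPΩQ
  have e4 : oInter (oDiff Ω Q) (oDiff Ω P) = oDiff (oDiff Ω P) Q := by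
    rw [oInter_diff_diff, oDiff_comm']
  rw [e1, e2, e3, e4] at hD
  have hD' : eIm F E Q (oDiff Ω Q) ∩ eIm F E P (oDiff Ω P) =
      E.η Q (oDiff Ω Q) ''
        ((eIm F E (oEmpty r) Q) ×ˢ (eIm F E P (oDiff (oDiff Ω P) Q))) := hD
  have hxmem : E.η P (oDiff Ω P) (a, E.η Q (oDiff (oDiff Ω P) Q) (c, d)) ∈
      eIm F E Q (oDiff Ω Q) ∩ eIm F E P (oDiff Ω P) :=
    ⟨step1, eta_mem_eIm haF hbF⟩
  rw [hD'] at hxmem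
  obtain ⟨⟨u₂, w₂⟩, ⟨hu₂, hw₂⟩, heq₂⟩ := hxmem
  have hu₂F : u₂ ∈ F.obj Q := by
    have h := eIm_sub (odisj_empty_left Q) hu₂
    rwa [oUnion_empty_left] at h
  have hw₂F : w₂ ∈ F.obj (oDiff Ω Q) := by
    have h := eIm_sub hPD' hw₂
    rwa [ePD'] at h
  have hinj2 := eta_inj hQΩQ hu₂F hw₂F huF hwF (heq₂.trans hxeq.symm)
  have hwIm : w ∈ eIm F E P (oDiff (oDiff Ω P) Q) := hinj2.2 ▸ hw₂
  obtain ⟨a₀, d₀, ha₀F, hd₀F, hweq⟩ := mem_eIm.mp hwIm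
  -- Step 3: u is indecomposable
  have hQne : Q ≠ oEmpty r := indec_ne hc
  have hwsat : w ∈ eIm F E (oEmpty r) (oDiff Ω Q) := by rw [satL hne]; exact hwF
  have hu : u ∈ indec F E Q := by
    rw [mem_indec hQne]
    refine ⟨huF, fun I J h1 h2 h3 h4 hIm => ?_⟩
    have hIQ : oSub I Q := h4 ▸ osub_union_left I J
    have hJQ : oSub J Q := h4 ▸ osub_union_right I J
    have s1 := (firstRepl hQΩQ huF hwF hwsat h1 h4).mp hIm
    rw [hxeq] at s1
    have hIdis : oDisj I (oUnion J (oDiff Ω Q)) :=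
      odisj_union_right h1 (odisj_mono hQΩQ hIQ (osub_refl _))
    have hUU2 : oUnion P (oDiff Ω P) = oUnion I (oUnion J (oDiff Ω Q)) := by
      rw [hUP, ← oUnion_assoc, h4, hUQ]
    have hD2 := E.D1 hPΩP hIdis hUU2
    have e21 : oInter P I = oEmpty r :=
      oInter_eq_empty (odisj_mono hPQ (osub_refl P) hIQ)
    have e22 : oInter P (oUnion J (oDiff Ω Q)) = P := by
      rw [oInter_union_distrib, oInter_eq_empty (odisj_mono hPQ (osub_refl P) hJQ),
        oInter_eq_left hPΩQ, oUnion_empty_left]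
    have e23 : oInter (oDiff Ω P) I = I := oInter_eq_right (osub_trans hIQ hQ)
    have e24 : oInter (oDiff Ω P) (oUnion J (oDiff Ω Q)) =
        oUnion J (oDiff (oDiff Ω P) Q) := by
      rw [oInter_union_distrib, oInter_eq_right (osub_trans hJQ hQ), oInter_diff_diff]
    rw [e21, e22, e23, e24] at hD2
    have hD2' : eIm F E P (oDiff Ω P) ∩ eIm F E I (oUnion J (oDiff Ω Q)) =
        E.η P (oDiff Ω P) ''
          ((eIm F E (oEmpty r) P) ×ˢ
            (eIm F E I (oUnion J (oDiff (oDiff Ω P) Q)))) := hD2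
    have hxmem2 : E.η P (oDiff Ω P) (a, E.η Q (oDiff (oDiff Ω P) Q) (c, d)) ∈
        eIm F E P (oDiff Ω P) ∩ eIm F E I (oUnion J (oDiff Ω Q)) :=
      ⟨eta_mem_eIm haF hbF, s1⟩
    rw [hD2'] at hxmem2
    obtain ⟨⟨a₃, b₃⟩, ⟨ha₃, hb₃⟩, heq₃⟩ := hxmem2
    have ha₃F : a₃ ∈ F.obj P := by
      have h := eIm_sub (odisj_empty_left P) ha₃
      rwa [oUnion_empty_left] at h
    have hIJD'dis : oDisj I (oUnion J (oDiff (oDiff Ω P) Q)) :=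
      odisj_union_right h1 (odisj_mono hQD' hIQ (osub_refl _))
    have eIJD' : oUnion I (oUnion J (oDiff (oDiff Ω P) Q)) = oDiff Ω P := by
      rw [← oUnion_assoc, h4, hUQD']
    have hb₃F : b₃ ∈ F.obj (oDiff Ω P) := by
      have h := eIm_sub hIJD'dis hb₃
      rwa [eIJD'] at h
    have hinj3 := eta_inj hPΩP ha₃F hb₃F haF hbF heq₃
    have hbJD : E.η Q (oDiff (oDiff Ω P) Q) (c, d) ∈
        eIm F E I (oUnion J (oDiff (oDiff Ω P) Q)) := hinj3.2 ▸ hb₃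
    have hdsat : d ∈ eIm F E (oEmpty r) (oDiff (oDiff Ω P) Q) := by
      rw [satL hne]; exact hdF
    have s4 := (firstRepl hQD' hcF hdF hdsat h1 h4).mpr hbJD
    exact ((mem_indec hQne).mp hc).2 I J h1 h2 h3 h4 s4
  -- Step 4: a₀ is indecomposable
  have hPne : P ≠ oEmpty r := indec_ne ha
  have husat : u ∈ eIm F E Q (oEmpty r) := by rw [satR hne]; exact huF
  have ha₀ : a₀ ∈ indec F E P := by
    rw [mem_indec hPne]
    refine ⟨ha₀F, fun I J h1 h2 h3 h4 hIm => ?_⟩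
    have hIP : oSub I P := h4 ▸ osub_union_left I J
    have hJP : oSub J P := h4 ▸ osub_union_right I J
    have hd₀sat : d₀ ∈ eIm F E (oEmpty r) (oDiff (oDiff Ω P) Q) := by
      rw [satL hne]; exact hd₀F
    have s1 := (firstRepl hPD' ha₀F hd₀F hd₀sat h1 h4).mp hIm
    rw [hweq] at s1
    have hIJD'dis : oDisj I (oUnion J (oDiff (oDiff Ω P) Q)) :=
      odisj_union_right h1 (odisj_mono hPD' hIP (osub_refl _))
    have eU5 : oUnion I (oUnion J (oDiff (oDiff Ω P) Q)) = oDiff Ω Q := by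
      rw [← oUnion_assoc, h4, ePD']
    have s2 := (pairRepl hQΩQ huF hwF husat hIJD'dis eU5).mp s1
    rw [hxeq] at s2
    have hdisj6 : oDisj (oUnion Q I) (oUnion J (oDiff (oDiff Ω P) Q)) := by
      apply odisj_union_left
      · exact odisj_union_right (odisj_mono (odisj_symm hPQ) (osub_refl Q) hJP) hQD'
      · exact hIJD'dis
    have hUU6 : oUnion P (oDiff Ω P) =
        oUnion (oUnion Q I) (oUnion J (oDiff (oDiff Ω P) Q)) := by
      rw [hUP, oUnion_assoc Q I, ← oUnion_assoc I J, h4, ePD', hUQ]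
    have hD6 := E.D1 hPΩP hdisj6 hUU6
    have e61 : oInter P (oUnion Q I) = I := by
      rw [oInter_union_distrib, oInter_eq_empty hPQ, oInter_eq_right hIP,
        oUnion_empty_left]
    have e62 : oInter P (oUnion J (oDiff (oDiff Ω P) Q)) = J := by
      rw [oInter_union_distrib, oInter_eq_right hJP, oInter_eq_empty hPD',
        oUnion_empty_right]
    have e63 : oInter (oDiff Ω P) (oUnion Q I) = Q := by
      rw [oInter_union_distrib, oInter_eq_right hQ,
        oInter_eq_empty (odisj_mono (odisj_symm hPΩP) (osub_refl _) hIP),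
        oUnion_empty_right]
    have e64 : oInter (oDiff Ω P) (oUnion J (oDiff (oDiff Ω P) Q)) =
        oDiff (oDiff Ω P) Q := by
      rw [oInter_union_distrib,
        oInter_eq_empty (odisj_mono (odisj_symm hPΩP) (osub_refl _) hJP),
        oInter_eq_right (odiff_sub _ Q), oUnion_empty_left]
    rw [e61, e62, e63, e64] at hD6
    have hD6' : eIm F E P (oDiff Ω P) ∩
        eIm F E (oUnion Q I) (oUnion J (oDiff (oDiff Ω P) Q)) =
        E.η P (oDiff Ω P) ''
          ((eIm F E I J) ×ˢ (eIm F E Q (oDiff (oDiff Ω P) Q))) := hD6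
    have hxmem6 : E.η P (oDiff Ω P) (a, E.η Q (oDiff (oDiff Ω P) Q) (c, d)) ∈
        eIm F E P (oDiff Ω P) ∩
          eIm F E (oUnion Q I) (oUnion J (oDiff (oDiff Ω P) Q)) :=
      ⟨eta_mem_eIm haF hbF, s2⟩
    rw [hD6'] at hxmem6
    obtain ⟨⟨a₄, b₄⟩, ⟨ha₄, hb₄⟩, heq₄⟩ := hxmem6
    have ha₄F : a₄ ∈ F.obj P := by
      have h := eIm_sub h1 ha₄
      rwa [h4] at h
    have hb₄F : b₄ ∈ F.obj (oDiff Ω P) := by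
      have h := eIm_sub hQD' hb₄
      rwa [hUQD'] at h
    have hinj4 := eta_inj hPΩP ha₄F hb₄F haF hbF heq₄
    have : a ∈ eIm F E I J := hinj4.1 ▸ ha₄
    exact ((mem_indec hPne).mp ha).2 I J h1 h2 h3 h4 this
  -- Step 5: d₀ has the same decomposition behaviour as d
  have hcsat : c ∈ eIm F E Q (oEmpty r) := by rw [satR hne]; exact hcF
  have hasatR : a ∈ eIm F E P (oEmpty r) := by rw [satR hne]; exact haF
  have ha₀sat : a₀ ∈ eIm F E P (oEmpty r) := by rw [satR hne]; exact ha₀F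
  have hsame : ∀ S T : Obj r, oDisj S T → oUnion S T = oDiff (oDiff Ω P) Q →
      (d ∈ eIm F E S T ↔ d₀ ∈ eIm F E S T) := by
    intro S T hST hSTU
    have hTD' : oSub T (oDiff (oDiff Ω P) Q) := hSTU ▸ osub_union_right S T
    have i1 := pairRepl hQD' hcF hdF hcsat hST hSTU
    have hQS_T : oDisj (oUnion Q S) T :=
      odisj_union_left (odisj_mono hQD' (osub_refl Q) hTD') hST
    have hQS_U : oUnion (oUnion Q S) T = oDiff Ω P := by
      rw [oUnion_assoc, hSTU, hUQD']
    have i2 := pairRepl hPΩP haF hbF hasatR hQS_T hQS_U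
    have i3 := pairRepl hPD' ha₀F hd₀F ha₀sat hST hSTU
    rw [hweq] at i3
    have hPS_T : oDisj (oUnion P S) T :=
      odisj_union_left (odisj_mono hPD' (osub_refl P) hTD') hST
    have hPS_U : oUnion (oUnion P S) T = oDiff Ω Q := by
      rw [oUnion_assoc, hSTU, ePD']
    have i4 := pairRepl hQΩQ huF hwF husat hPS_T hPS_U
    rw [hxeq] at i4
    have emid : oUnion P (oUnion Q S) = oUnion Q (oUnion P S) := by
      rw [← oUnion_assoc, oUnion_comm P Q, oUnion_assoc]
    have i4' : w ∈ eIm F E (oUnion P S) T ↔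
        E.η P (oDiff Ω P) (a, E.η Q (oDiff (oDiff Ω P) Q) (c, d)) ∈
          eIm F E (oUnion P (oUnion Q S)) T := by
      rw [emid]; exact i4
    exact i1.trans (i2.trans (i4'.symm.trans i3.symm))
  have hd₀K : d₀ ∈ indecK F E m (oDiff (oDiff Ω P) Q) :=
    latEq hne m _ d d₀ hdF hd₀F hsame hd
  -- Step 6: conclude
  have hwK : w ∈ indecK F E (m + 1) (oDiff Ω Q) := by
    refine mem_indecK_succ.mpr ⟨P, hPΩQ, ?_⟩
    rw [show oDiff (oDiff Ω Q) P = oDiff (oDiff Ω P) Q from oDiff_comm' Ω Q P]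
    exact ⟨(a₀, d₀), ⟨ha₀, hd₀K⟩, hweq⟩
  exact ⟨(u, w), ⟨hu, hwK⟩, hxeq⟩



/-! ### The main induction -/

lemma main13 (hne : (F.obj (oEmpty r)).Nonempty) :
    ∀ (k : ℕ) (Ω : Obj r) (ρ : Fin r) (ω x : ℕ), ω ∈ Ω ρ →
      x ∈ indecK F E (k + 1) Ω →
      ∃ Ω₁ : Obj r, oSub Ω₁ Ω ∧ ω ∈ Ω₁ ρ ∧
        x ∈ E.η Ω₁ (oDiff Ω Ω₁) '' (indec F E Ω₁ ×ˢ indecK F E k (oDiff Ω Ω₁))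
  | 0, Ω, ρ, ω, x, hω, hx => by
    obtain ⟨P, hP, him⟩ := mem_indecK_succ.mp hx
    obtain ⟨⟨a, b⟩, ⟨ha, hb⟩, heq⟩ := him
    obtain ⟨hD0, _⟩ := indecK_zero_iff.mp hb
    have hωP : ω ∈ P ρ := by
      have h0 : Ω ρ \ P ρ = ∅ := congrFun hD0 ρ
      exact Finset.sdiff_eq_empty_iff_subset.mp h0 hω
    exact ⟨P, hP, hωP, ⟨(a, b), ⟨ha, hb⟩, heq⟩⟩
  | (k + 1), Ω, ρ, ω, x, hω, hx => by
    obtain ⟨P, hP, him⟩ := mem_indecK_succ.mp hx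
    obtain ⟨⟨a, b⟩, ⟨ha, hb⟩, heq⟩ := him
    by_cases hωP : ω ∈ P ρ
    · exact ⟨P, hP, hωP, ⟨(a, b), ⟨ha, hb⟩, heq⟩⟩
    · have hωd : ω ∈ (oDiff Ω P) ρ := Finset.mem_sdiff.mpr ⟨hω, hωP⟩
      obtain ⟨Q, hQ, hωQ, him2⟩ := main13 hne k (oDiff Ω P) ρ ω b hωd hb
      obtain ⟨⟨c, d⟩, ⟨hc, hd⟩, heq2⟩ := him2
      have hex := exchange hne hP hQ ha hc hd
      rw [heq2, heq] at hex
      exact ⟨Q, osub_trans hQ (odiff_sub Ω P), hωQ, hex⟩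

/-! ### Disjointness of distinct pieces -/

lemma sub_of_both {Ω Ω₁ Ω₂ : Obj r} {ρ : Fin r} {ω x : ℕ} {k : ℕ}
    (h1 : oSub Ω₁ Ω) (h2 : oSub Ω₂ Ω) (hω1 : ω ∈ Ω₁ ρ) (hω2 : ω ∈ Ω₂ ρ)
    (hx1 : x ∈ E.η Ω₁ (oDiff Ω Ω₁) '' (indec F E Ω₁ ×ˢ indecK F E k (oDiff Ω Ω₁)))
    (hx2 : x ∈ eIm F E Ω₂ (oDiff Ω Ω₂)) : oSub Ω₁ Ω₂ := by
  obtain ⟨⟨x₁, y₁⟩, ⟨hx₁, hy₁⟩, heq⟩ := hx1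
  have hx₁F : x₁ ∈ F.obj Ω₁ := indec_sub hx₁
  have hy₁F : y₁ ∈ F.obj (oDiff Ω Ω₁) := indecK_sub k _ hy₁
  have hx1' : x ∈ eIm F E Ω₁ (oDiff Ω Ω₁) := by
    rw [← heq]; exact eta_mem_eIm hx₁F hy₁F
  have hD := E.D1 (odisj_diff Ω Ω₁) (odisj_diff Ω Ω₂)
    ((oUnion_diff h1).trans (oUnion_diff h2).symm)
  have e1 : oInter Ω₁ (oDiff Ω Ω₂) = oDiff Ω₁ Ω₂ := oInter_diff h1
  rw [e1] at hD
  have hD' : eIm F E Ω₁ (oDiff Ω Ω₁) ∩ eIm F E Ω₂ (oDiff Ω Ω₂) =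
      E.η Ω₁ (oDiff Ω Ω₁) ''
        ((eIm F E (oInter Ω₁ Ω₂) (oDiff Ω₁ Ω₂)) ×ˢ
          (eIm F E (oInter (oDiff Ω Ω₁) Ω₂) (oInter (oDiff Ω Ω₁) (oDiff Ω Ω₂)))) := hD
  have hxmem : x ∈ eIm F E Ω₁ (oDiff Ω Ω₁) ∩ eIm F E Ω₂ (oDiff Ω Ω₂) := ⟨hx1', hx2⟩
  rw [hD'] at hxmem
  obtain ⟨⟨x₁', y₁'⟩, ⟨hx₁', hy₁'⟩, heq'⟩ := hxmem
  have hIdis : oDisj (oInter Ω₁ Ω₂) (oDiff Ω₁ Ω₂) :=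
    odisj_mono (odisj_diff Ω₁ Ω₂) (osub_inter_right Ω₁ Ω₂) (osub_refl _)
  have hx₁'F : x₁' ∈ F.obj Ω₁ := by
    have h := eIm_sub hIdis hx₁'
    rwa [oInter_union_sdiff] at h
  have hJdis : oDisj (oInter (oDiff Ω Ω₁) Ω₂) (oInter (oDiff Ω Ω₁) (oDiff Ω Ω₂)) :=
    odisj_mono (odisj_diff Ω Ω₂) (osub_inter_right _ Ω₂) (osub_inter_right _ _)
  have hy₁'F : y₁' ∈ F.obj (oDiff Ω Ω₁) := by
    have h := eIm_sub hJdis hy₁'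
    rwa [← oInter_union_distrib, oUnion_diff h2, oInter_eq_left (odiff_sub Ω Ω₁)] at h
  have hinj := eta_inj (odisj_diff Ω Ω₁) hx₁'F hy₁'F hx₁F hy₁F (heq'.trans heq.symm)
  have hx₁Im : x₁ ∈ eIm F E (oInter Ω₁ Ω₂) (oDiff Ω₁ Ω₂) := hinj.1 ▸ hx₁'
  by_contra hns
  have hJne : oDiff Ω₁ Ω₂ ≠ oEmpty r := fun h => hns (osub_of_diff_eq_empty h)
  have hIne : oInter Ω₁ Ω₂ ≠ oEmpty r :=
    ne_oEmpty_of_mem (i := ρ) (Finset.mem_inter.mpr ⟨hω1, hω2⟩)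
  exact ((mem_indec (indec_ne hx₁)).mp hx₁).2 _ _ hIdis hIne hJne
    (oInter_union_sdiff Ω₁ Ω₂) hx₁Im

lemma disjoint_pieces {Ω Ω₁ Ω₂ : Obj r} {ρ : Fin r} {ω : ℕ} {k : ℕ}
    (h1 : oSub Ω₁ Ω) (h2 : oSub Ω₂ Ω) (hω1 : ω ∈ Ω₁ ρ) (hω2 : ω ∈ Ω₂ ρ)
    (hne12 : Ω₁ ≠ Ω₂) :
    (E.η Ω₁ (oDiff Ω Ω₁) '' (indec F E Ω₁ ×ˢ indecK F E k (oDiff Ω Ω₁))) ∩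
      (E.η Ω₂ (oDiff Ω Ω₂) '' (indec F E Ω₂ ×ˢ indecK F E k (oDiff Ω Ω₂))) = ∅ := by
  rw [Set.eq_empty_iff_forall_notMem]
  rintro x ⟨hx1, hx2⟩
  have hx2' : x ∈ eIm F E Ω₂ (oDiff Ω Ω₂) := by
    obtain ⟨⟨x₂, y₂⟩, ⟨hx₂, hy₂⟩, heq⟩ := hx2
    rw [← heq]; exact eta_mem_eIm (indec_sub hx₂) (indecK_sub k _ hy₂)
  have hx1' : x ∈ eIm F E Ω₁ (oDiff Ω Ω₁) := by
    obtain ⟨⟨x₁, y₁⟩, ⟨hx₁, hy₁⟩, heq⟩ := hx1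
    rw [← heq]; exact eta_mem_eIm (indec_sub hx₁) (indecK_sub k _ hy₁)
  have hs1 : oSub Ω₁ Ω₂ := sub_of_both h1 h2 hω1 hω2 hx1 hx2'
  have hs2 : oSub Ω₂ Ω₁ := sub_of_both h2 h1 hω2 hω1 hx2 hx1'
  exact hne12 (funext fun i => Finset.Subset.antisymm (hs1 i) (hs2 i))


end Stmt13Helpers


/-- For nonempty `Ω`, any base point `(ω, ρ) ∈ Ω` and any `k ≥ 1`,
`F_Η^(k)[Ω] = ∐_{(ω,ρ) ∈ Ω₁ ⊆ Ω} η(F_Η[Ω₁] × F_Η^(k-1)[Ω − Ω₁])`,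
a disjoint union. -/
theorem stmt13 {r : ℕ} (hr : 0 < r) (F : Species r) (E : CompOp F)
    (hF : ∃ Ω : Obj r, (F.obj Ω).Nonempty)
    (Ω : Obj r) (hΩ : Ω ≠ oEmpty r) (ρ : Fin r) (ω : ℕ) (hω : ω ∈ Ω ρ)
    (k : ℕ) (hk : 1 ≤ k) :
    indecK F E k Ω =
      (⋃ (Ω₁ : Obj r) (_ : oSub Ω₁ Ω) (_ : ω ∈ Ω₁ ρ),
        E.η Ω₁ (oDiff Ω Ω₁) '' ((indec F E Ω₁) ×ˢ (indecK F E (k - 1) (oDiff Ω Ω₁)))) ∧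
    (∀ Ω₁ Ω₂ : Obj r, oSub Ω₁ Ω → oSub Ω₂ Ω → ω ∈ Ω₁ ρ → ω ∈ Ω₂ ρ → Ω₁ ≠ Ω₂ →
      (E.η Ω₁ (oDiff Ω Ω₁) '' ((indec F E Ω₁) ×ˢ (indecK F E (k - 1) (oDiff Ω Ω₁)))) ∩
        (E.η Ω₂ (oDiff Ω Ω₂) ''
          ((indec F E Ω₂) ×ˢ (indecK F E (k - 1) (oDiff Ω Ω₂)))) = ∅) := by
  constructor
  · by_cases hE : F.obj (oEmpty r) = ∅
    · obtain ⟨m, rfl⟩ : ∃ m, k = m + 1 := ⟨k - 1, by omega⟩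
      ext x
      rw [indecK_all_empty hE]
      simp only [Set.mem_empty_iff_false, false_iff, Set.mem_iUnion, not_exists]
      rintro Ω₁ hsub hmem ⟨⟨a, b⟩, ⟨ha, hb⟩, heq⟩
      rw [indecK_all_empty hE] at hb
      exact hb
    · have hne : (F.obj (oEmpty r)).Nonempty := Finset.nonempty_iff_ne_empty.mpr hE
      obtain ⟨m, rfl⟩ : ∃ m, k = m + 1 := ⟨k - 1, by omega⟩
      rw [Nat.add_sub_cancel]
      ext x
      simp only [Set.mem_iUnion]
      constructor
      · intro hx
        obtain ⟨Ω₁, h1, h2, h3⟩ := main13 hne m Ω ρ ω x hω hx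
        exact ⟨Ω₁, h1, h2, h3⟩
      · rintro ⟨Ω₁, h1, h2, h3⟩
        exact mem_indecK_succ.mpr ⟨Ω₁, h1, h3⟩
  · intro Ω₁ Ω₂ h1 h2 hω1 hω2 hne12
    exact disjoint_pieces h1 h2 hω1 hω2 hne12

end
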